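/- Let Λ = Λ(k[h], σ, a) be a generalized Weyl algebra over a field k of characteristic zero with a ≠ 0. If gcd(a, a') = 1, then for every irreducible polynomial p dividing a, the left ideal I(x,p) = Λx + Λp is a projective left Λ-module. -/

import Mathlib

open Polynomial

/-- Generators: `ι 0 = y`, `ι 1 = h`, `ι 2 = x`. Defining relations of the
generalized Weyl algebra `Λ(k[h], σ, a)`, where the automorphism `σ` of `k[h]`
is determined by `s = σ(h)` (so `σ(f) = f ∘ s`):
`xh = σ(h)x`, `hy = yσ(h)`, `yx = a(h)`, `xy = σ(a)(h)`. -/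
inductive gwaRelS (k : Type*) [CommRing k] (s a : Polynomial k) :
    FreeAlgebra k (Fin 3) → FreeAlgebra k (Fin 3) → Prop
  | xh : gwaRelS k s a (FreeAlgebra.ι k 2 * FreeAlgebra.ι k 1)
      (Polynomial.aeval (FreeAlgebra.ι k 1) s * FreeAlgebra.ι k 2)
  | hy : gwaRelS k s a (FreeAlgebra.ι k 1 * FreeAlgebra.ι k 0)
      (FreeAlgebra.ι k 0 * Polynomial.aeval (FreeAlgebra.ι k 1) s)
  | yx : gwaRelS k s a (FreeAlgebra.ι k 0 * FreeAlgebra.ι k 2)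
      (Polynomial.aeval (FreeAlgebra.ι k 1) a)
  | xy : gwaRelS k s a (FreeAlgebra.ι k 2 * FreeAlgebra.ι k 0)
      (Polynomial.aeval (FreeAlgebra.ι k 1) (a.comp s))

/-- The generalized Weyl algebra `Λ(k[h], σ, a)` with `σ(h) = s`. -/
abbrev GWAS (k : Type*) [CommRing k] (s a : Polynomial k) :=
  RingQuot (gwaRelS k s a)

/-- `y ∈ Λ`. -/
noncomputable def GWAS.y (k : Type*) [CommRing k] (s a : Polynomial k) :
    GWAS k s a :=
  RingQuot.mkAlgHom k (gwaRelS k s a) (FreeAlgebra.ι k 0)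

/-- `h ∈ Λ`. -/
noncomputable def GWAS.h (k : Type*) [CommRing k] (s a : Polynomial k) :
    GWAS k s a :=
  RingQuot.mkAlgHom k (gwaRelS k s a) (FreeAlgebra.ι k 1)

/-- `x ∈ Λ`. -/
noncomputable def GWAS.x (k : Type*) [CommRing k] (s a : Polynomial k) :
    GWAS k s a :=
  RingQuot.mkAlgHom k (gwaRelS k s a) (FreeAlgebra.ι k 2)

namespace GWAProof
variable {k : Type*} [Field k]

noncomputable def sInv (s : k[X]) : k[X] := C (s.coeff 1)⁻¹ * (X - C (s.coeff 0))
noncomputable def compS (s : k[X]) : k[X] →ₗ[k] k[X] := (aeval s).toLinearMap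
noncomputable def mulP : k[X] →ₐ[k] Module.End k (ℤ →₀ k[X]) :=
  Algebra.lsmul k k (ℤ →₀ k[X])
noncomputable def rX (s a : k[X]) : (ℤ →₀ k[X]) →ₗ[k] (ℤ →₀ k[X]) :=
  Finsupp.lsum k fun n : ℤ => Finsupp.lsingle (n + 1) ∘ₗ
    (if 0 ≤ n then compS s else compS s ∘ₗ LinearMap.mulRight k a)
noncomputable def rY (s a : k[X]) : (ℤ →₀ k[X]) →ₗ[k] (ℤ →₀ k[X]) :=
  Finsupp.lsum k fun n : ℤ => Finsupp.lsingle (n - 1) ∘ₗ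
    (if n ≤ 0 then compS (sInv s) else LinearMap.mulRight k a ∘ₗ compS (sInv s))
theorem rX_single (s a : k[X]) (n : ℤ) (f : k[X]) :
    rX s a (Finsupp.single n f) =
      Finsupp.single (n + 1) (if 0 ≤ n then f.comp s else (f * a).comp s) := by
  rw [rX, Finsupp.lsum_single]; split_ifs <;> rfl
theorem rY_single (s a : k[X]) (n : ℤ) (f : k[X]) :
    rY s a (Finsupp.single n f) =
      Finsupp.single (n - 1)
        (if n ≤ 0 then f.comp (sInv s) else f.comp (sInv s) * a) := by
  rw [rY, Finsupp.lsum_single]; split_ifs <;> rfl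
theorem mulP_single (g : k[X]) (n : ℤ) (f : k[X]) :
    mulP g (Finsupp.single n f) = Finsupp.single n (g * f) := by
  show g • Finsupp.single n f = _
  rw [Finsupp.smul_single, smul_eq_mul]

theorem coeff1_ne (s : k[X]) (hs : s.degree = 1) : s.coeff 1 ≠ 0 := by
  have h1 : s.natDegree = 1 := natDegree_eq_of_degree_eq_some hs
  have h2 : s ≠ 0 := fun h => by simp [h] at hs
  have := mt leadingCoeff_eq_zero.mp h2
  rwa [leadingCoeff, h1] at this

theorem s_comp_sInv (s : k[X]) (hs : s.degree = 1) : s.comp (sInv s) = X := by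
  have h1 : s.coeff 1 ≠ 0 := coeff1_ne s hs
  have hse : s = C (s.coeff 1) * X + C (s.coeff 0) :=
    eq_X_add_C_of_degree_le_one hs.le
  generalize hc1 : s.coeff 1 = c1 at *
  generalize hc0 : s.coeff 0 = c0 at *
  have key : (C c1 : k[X]) * C c1⁻¹ = 1 := by
    rw [← C_mul, mul_inv_cancel₀ h1, C_1]
  rw [sInv, hc1, hc0]
  conv_lhs => rw [hse]
  simp only [add_comp, mul_comp, C_comp, X_comp]
  rw [← mul_assoc, key]
  ring

theorem sInv_comp_s (s : k[X]) (hs : s.degree = 1) : (sInv s).comp s = X := by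
  have h1 : s.coeff 1 ≠ 0 := coeff1_ne s hs
  have hse : s = C (s.coeff 1) * X + C (s.coeff 0) :=
    eq_X_add_C_of_degree_le_one hs.le
  generalize hc1 : s.coeff 1 = c1 at *
  generalize hc0 : s.coeff 0 = c0 at *
  have key : (C c1⁻¹ : k[X]) * C c1 = 1 := by
    rw [← C_mul, inv_mul_cancel₀ h1, C_1]
  rw [sInv, hc1, hc0]
  simp only [mul_comp, sub_comp, C_comp, X_comp]
  conv_lhs => rw [hse]
  rw [add_sub_cancel_right, ← mul_assoc, key]
  ring

noncomputable def Fr (s a : k[X]) :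
    FreeAlgebra k (Fin 3) →ₐ[k] Module.End k (ℤ →₀ k[X]) :=
  FreeAlgebra.lift k ![rY s a, mulP X, rX s a]

theorem Fr_i0 (s a : k[X]) : Fr s a (FreeAlgebra.ι k 0) = rY s a := by
  rw [Fr, FreeAlgebra.lift_ι_apply]; rfl
theorem Fr_i1 (s a : k[X]) : Fr s a (FreeAlgebra.ι k 1) = mulP X := by
  rw [Fr, FreeAlgebra.lift_ι_apply]; rfl
theorem Fr_i2 (s a : k[X]) : Fr s a (FreeAlgebra.ι k 2) = rX s a := by
  rw [Fr, FreeAlgebra.lift_ι_apply]; rfl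

theorem Fr_aeval (s a g : k[X]) :
    Fr s a (aeval (FreeAlgebra.ι k 1) g) = mulP g := by
  rw [← aeval_algHom_apply, Fr_i1, aeval_algHom_apply, aeval_X_left_apply]

theorem Fr_rel (s a : k[X]) (hs : s.degree = 1) :
    ∀ {u v : FreeAlgebra k (Fin 3)}, gwaRelS k s a u v → Fr s a u = Fr s a v := by
  intro u v r
  cases r with
  | xh =>
    rw [map_mul, map_mul, Fr_i1, Fr_i2, Fr_aeval]
    refine Finsupp.lhom_ext fun n f => ?_
    rw [Module.End.mul_apply, Module.End.mul_apply, mulP_single, rX_single,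
      rX_single, mulP_single]
    rcases le_or_gt 0 n with h | h
    · rw [if_pos h, if_pos h, mul_comp, X_comp]
    · rw [if_neg (not_le.mpr h), if_neg (not_le.mpr h)]
      rw [mul_comp, mul_comp, mul_comp, X_comp]
      ring
  | hy =>
    rw [map_mul, map_mul, Fr_i1, Fr_i0, Fr_aeval]
    refine Finsupp.lhom_ext fun n f => ?_
    rw [Module.End.mul_apply, Module.End.mul_apply, rY_single, mulP_single,
      mulP_single, rY_single]
    rcases le_or_gt n 0 with h | h
    · rw [if_pos h, if_pos h, mul_comp, s_comp_sInv s hs]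
    · rw [if_neg (not_le.mpr h), if_neg (not_le.mpr h), mul_comp,
        s_comp_sInv s hs, mul_assoc]
  | yx =>
    rw [map_mul, Fr_i0, Fr_i2, Fr_aeval]
    refine Finsupp.lhom_ext fun n f => ?_
    rw [Module.End.mul_apply, rX_single, mulP_single]
    rcases le_or_gt 0 n with h | h
    · rw [if_pos h, rY_single, if_neg (by omega), comp_assoc,
        s_comp_sInv s hs, comp_X]
      congr 1
      · omega
      · ring
    · rw [if_neg (not_le.mpr h), rY_single, if_pos (by omega), comp_assoc,
        s_comp_sInv s hs, comp_X]
      congr 1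
      · omega
      · ring
  | xy =>
    rw [map_mul, Fr_i2, Fr_i0, Fr_aeval]
    refine Finsupp.lhom_ext fun n f => ?_
    rw [Module.End.mul_apply, rY_single, mulP_single]
    rcases le_or_gt n 0 with h | h
    · rw [if_pos h, rX_single, if_neg (by omega), mul_comp, comp_assoc,
        sInv_comp_s s hs, comp_X]
      congr 1
      · omega
      · ring
    · rw [if_neg (not_le.mpr h), rX_single, if_pos (by omega), mul_comp,
        comp_assoc, sInv_comp_s s hs, comp_X]
      congr 1
      · omega
      · ring



section Lambda

variable (s a : k[X])

local notation "Λ" => GWAS k s a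
local notation "XX" => GWAS.x k s a
local notation "YY" => GWAS.y k s a
local notation "HH" => GWAS.h k s a

noncomputable def rho (hs : s.degree = 1) :
    Λ →ₐ[k] Module.End k (ℤ →₀ k[X]) :=
  RingQuot.liftAlgHom k ⟨Fr s a, fun _ _ h => Fr_rel s a hs h⟩

theorem rho_x (hs : s.degree = 1) : rho s a hs XX = rX s a := by
  rw [rho, GWAS.x, RingQuot.liftAlgHom_mkAlgHom_apply, Fr_i2]

theorem rho_y (hs : s.degree = 1) : rho s a hs YY = rY s a := by
  rw [rho, GWAS.y, RingQuot.liftAlgHom_mkAlgHom_apply, Fr_i0]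

theorem rho_h (hs : s.degree = 1) : rho s a hs HH = mulP X := by
  rw [rho, GWAS.h, RingQuot.liftAlgHom_mkAlgHom_apply, Fr_i1]

theorem rho_aeval (hs : s.degree = 1) (f : k[X]) :
    rho s a hs (aeval HH f) = mulP f := by
  rw [← aeval_algHom_apply, rho_h, aeval_algHom_apply, aeval_X_left_apply]

-- relations in Λ
theorem xh_rel : XX * HH = aeval HH s * XX := by
  have := RingQuot.mkAlgHom_rel k (gwaRelS.xh (k := k) (s := s) (a := a))
  rw [map_mul, map_mul, ← aeval_algHom_apply] at this
  exact this

theorem hy_rel : HH * YY = YY * aeval HH s := by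
  have := RingQuot.mkAlgHom_rel k (gwaRelS.hy (k := k) (s := s) (a := a))
  rw [map_mul, map_mul, ← aeval_algHom_apply] at this
  exact this

theorem yx_rel : YY * XX = aeval HH a := by
  have := RingQuot.mkAlgHom_rel k (gwaRelS.yx (k := k) (s := s) (a := a))
  rw [map_mul, ← aeval_algHom_apply] at this
  exact this

theorem xy_rel : XX * YY = aeval HH (a.comp s) := by
  have := RingQuot.mkAlgHom_rel k (gwaRelS.xy (k := k) (s := s) (a := a))
  rw [map_mul, ← aeval_algHom_apply] at this
  exact this

theorem x_hpow (n : ℕ) : XX * HH ^ n = (aeval HH s) ^ n * XX := by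
  induction n with
  | zero => simp
  | succ n ih =>
    rw [pow_succ, ← mul_assoc, ih, mul_assoc, xh_rel, ← mul_assoc, ← pow_succ]

theorem hpow_y (n : ℕ) : HH ^ n * YY = YY * (aeval HH s) ^ n := by
  induction n with
  | zero => simp
  | succ n ih =>
    rw [pow_succ, mul_assoc, hy_rel, ← mul_assoc, ih, mul_assoc, ← pow_succ]

theorem x_aeval (f : k[X]) :
    XX * aeval HH f = aeval HH (f.comp s) * XX := by
  induction f using Polynomial.induction_on' with
  | add p q hp hq =>
    rw [map_add, mul_add, hp, hq, add_comp, map_add, add_mul]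
  | monomial n c =>
    rw [aeval_monomial, ← mul_assoc, ← Algebra.commutes, mul_assoc, x_hpow,
      ← mul_assoc, monomial_comp, map_mul, aeval_C, map_pow]

theorem aeval_y (f : k[X]) :
    aeval HH f * YY = YY * aeval HH (f.comp s) := by
  induction f using Polynomial.induction_on' with
  | add p q hp hq =>
    rw [map_add, add_mul, hp, hq, add_comp, map_add, mul_add]
  | monomial n c =>
    rw [aeval_monomial, mul_assoc, hpow_y, ← mul_assoc, Algebra.commutes,
      mul_assoc, monomial_comp, map_mul, aeval_C, map_pow]



noncomputable def wmon (n : ℤ) : Λ :=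
  if 0 ≤ n then XX ^ n.toNat else YY ^ (-n).toNat

theorem wmon_nonneg {n : ℤ} (h : 0 ≤ n) : wmon s a n = XX ^ n.toNat :=
  if_pos h

theorem wmon_nonpos {n : ℤ} (h : n ≤ 0) : wmon s a n = YY ^ (-n).toNat := by
  rcases eq_or_lt_of_le h with h' | h'
  · subst h'; rw [wmon, if_pos le_rfl]; norm_num
  · exact if_neg (not_le.mpr h')

theorem x_wmon_nonneg {n : ℤ} (h : 0 ≤ n) :
    XX * wmon s a n = wmon s a (n + 1) := by
  rw [wmon_nonneg s a h, wmon_nonneg s a (by omega), ← pow_succ',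
    show (n + 1).toNat = n.toNat + 1 by omega]

theorem x_wmon_neg {n : ℤ} (h : n < 0) :
    XX * wmon s a n = aeval HH (a.comp s) * wmon s a (n + 1) := by
  rw [wmon_nonpos s a h.le, wmon_nonpos s a (by omega : n + 1 ≤ 0),
    show (-n).toNat = (-(n+1)).toNat + 1 by omega, pow_succ', ← mul_assoc,
    xy_rel]

theorem y_wmon_nonpos {n : ℤ} (h : n ≤ 0) :
    YY * wmon s a n = wmon s a (n - 1) := by
  rw [wmon_nonpos s a h, wmon_nonpos s a (by omega : n - 1 ≤ 0), ← pow_succ',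
    show (-(n-1)).toNat = (-n).toNat + 1 by omega]

theorem y_wmon_pos {n : ℤ} (h : 0 < n) :
    YY * wmon s a n = aeval HH a * wmon s a (n - 1) := by
  rw [wmon_nonneg s a h.le, wmon_nonneg s a (by omega : 0 ≤ n - 1),
    show n.toNat = (n-1).toNat + 1 by omega, pow_succ', ← mul_assoc, yx_rel]

noncomputable def Tm : (ℤ →₀ k[X]) →ₗ[k] Λ :=
  Finsupp.lsum k fun n =>
    LinearMap.mulRight k (wmon s a n) ∘ₗ (aeval HH).toLinearMap

theorem Tm_single (n : ℤ) (f : k[X]) :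
    Tm s a (Finsupp.single n f) = aeval HH f * wmon s a n := by
  rw [Tm, Finsupp.lsum_single]; rfl

noncomputable def eps (hs : s.degree = 1) : Λ →ₗ[k] (ℤ →₀ k[X]) where
  toFun c := rho s a hs c (Finsupp.single 0 1)
  map_add' c d := by (rw [map_add]) <;> rfl
  map_smul' c d := by (rw [map_smul]) <;> rfl

theorem eps_apply (hs : s.degree = 1) (c : Λ) :
    eps s a hs c = rho s a hs c (Finsupp.single 0 1) := rfl

theorem rho_xpow (hs : s.degree = 1) (j : ℕ) :
    rho s a hs (XX ^ j) (Finsupp.single 0 1) = Finsupp.single (j : ℤ) 1 := by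
  induction j with
  | zero => rw [pow_zero, map_one]; rfl
  | succ j ih =>
    rw [pow_succ', map_mul, Module.End.mul_apply, ih, rho_x, rX_single,
      if_pos (by omega : (0:ℤ) ≤ (j:ℤ)), one_comp]
    norm_cast

theorem rho_ypow (hs : s.degree = 1) (j : ℕ) :
    rho s a hs (YY ^ j) (Finsupp.single 0 1) =
      Finsupp.single (-(j : ℤ)) 1 := by
  induction j with
  | zero => rw [pow_zero, map_one]; rfl
  | succ j ih =>
    rw [pow_succ', map_mul, Module.End.mul_apply, ih, rho_y, rY_single,
      if_pos (by omega : -(j:ℤ) ≤ 0), one_comp]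
    congr 1
    omega

theorem rho_wmon (hs : s.degree = 1) (n : ℤ) :
    rho s a hs (wmon s a n) (Finsupp.single 0 1) = Finsupp.single n 1 := by
  rcases le_or_gt 0 n with h | h
  · rw [wmon_nonneg s a h, rho_xpow]
    congr 1
    omega
  · rw [wmon_nonpos s a h.le, rho_ypow]
    congr 1
    omega

theorem epsT (hs : s.degree = 1) (m : ℤ →₀ k[X]) :
    eps s a hs (Tm s a m) = m := by
  have : (eps s a hs) ∘ₗ (Tm s a) = LinearMap.id := by
    refine Finsupp.lhom_ext fun n f => ?_
    rw [LinearMap.comp_apply, Tm_single, LinearMap.id_apply, eps_apply,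
      map_mul, Module.End.mul_apply, rho_wmon, rho_aeval, mulP_single, mul_one]
  exact DFunLike.congr_fun this m

theorem T_rX (m : ℤ →₀ k[X]) : Tm s a (rX s a m) = XX * Tm s a m := by
  have : (Tm s a) ∘ₗ (rX s a) = LinearMap.mulLeft k XX ∘ₗ (Tm s a) := by
    refine Finsupp.lhom_ext fun n f => ?_
    rw [LinearMap.comp_apply, LinearMap.comp_apply, rX_single, Tm_single,
      Tm_single, LinearMap.mulLeft_apply, ← mul_assoc, x_aeval, mul_assoc]
    rcases le_or_gt 0 n with h | h
    · rw [if_pos h, x_wmon_nonneg s a h]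
    · rw [if_neg (not_le.mpr h), x_wmon_neg s a h, mul_comp, map_mul,
        mul_assoc]
  exact DFunLike.congr_fun this m

theorem T_rH (m : ℤ →₀ k[X]) : Tm s a (mulP X m) = HH * Tm s a m := by
  have : (Tm s a) ∘ₗ (mulP X : Module.End k (ℤ →₀ k[X])) =
      LinearMap.mulLeft k HH ∘ₗ (Tm s a) := by
    refine Finsupp.lhom_ext fun n f => ?_
    rw [LinearMap.comp_apply, LinearMap.comp_apply, mulP_single, Tm_single,
      Tm_single, LinearMap.mulLeft_apply, map_mul, aeval_X, mul_assoc]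
  exact DFunLike.congr_fun this m

theorem y_aeval (hs : s.degree = 1) (f : k[X]) :
    YY * aeval HH f = aeval HH (f.comp (sInv s)) * YY := by
  rw [aeval_y, comp_assoc, sInv_comp_s s hs, comp_X]

theorem T_rY (hs : s.degree = 1) (m : ℤ →₀ k[X]) :
    Tm s a (rY s a m) = YY * Tm s a m := by
  have : (Tm s a) ∘ₗ (rY s a) = LinearMap.mulLeft k YY ∘ₗ (Tm s a) := by
    refine Finsupp.lhom_ext fun n f => ?_
    rw [LinearMap.comp_apply, LinearMap.comp_apply, rY_single, Tm_single,
      Tm_single, LinearMap.mulLeft_apply, ← mul_assoc, y_aeval s a hs,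
      mul_assoc]
    rcases le_or_gt n 0 with h | h
    · rw [if_pos h, y_wmon_nonpos s a h]
    · rw [if_neg (not_le.mpr h), y_wmon_pos s a h, map_mul, mul_assoc]
  exact DFunLike.congr_fun this m

theorem T_mul (hs : s.degree = 1) (c : Λ) (m : ℤ →₀ k[X]) :
    Tm s a (rho s a hs c m) = c * Tm s a m := by
  suffices h : ∀ z : FreeAlgebra k (Fin 3), ∀ m : ℤ →₀ k[X],
      Tm s a (rho s a hs (RingQuot.mkAlgHom k (gwaRelS k s a) z) m) =
        RingQuot.mkAlgHom k (gwaRelS k s a) z * Tm s a m by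
    obtain ⟨z, rfl⟩ := RingQuot.mkAlgHom_surjective k (gwaRelS k s a) c
    exact h z m
  intro z
  induction z using FreeAlgebra.induction with
  | grade0 r =>
    intro m
    rw [AlgHom.commutes, AlgHom.commutes, Module.algebraMap_end_apply,
      map_smul, Algebra.smul_def]
  | grade1 i =>
    intro m
    fin_cases i
    · show Tm s a (rho s a hs YY m) = YY * Tm s a m
      rw [rho_y, T_rY s a hs]
    · show Tm s a (rho s a hs HH m) = HH * Tm s a m
      rw [rho_h, T_rH]
    · show Tm s a (rho s a hs XX m) = XX * Tm s a m
      rw [rho_x, T_rX]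
  | mul z w hz hw =>
    intro m
    rw [map_mul, map_mul, Module.End.mul_apply, hz, hw, mul_assoc]
  | add z w hz hw =>
    intro m
    rw [map_add, map_add, LinearMap.add_apply, map_add, add_mul, hz, hw]

theorem Teps (hs : s.degree = 1) (c : Λ) : Tm s a (eps s a hs c) = c := by
  rw [eps_apply, T_mul s a hs, Tm_single, map_one, one_mul]
  rw [wmon_nonneg s a le_rfl]
  norm_num



noncomputable def iterC (j : ℕ) : k[X] := (fun q : k[X] => q.comp (sInv s))^[j] a

theorem iterC_ne (hs : s.degree = 1) (ha : a ≠ 0) (j : ℕ) :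
    iterC s a j ≠ 0 := by
  induction j with
  | zero => exact ha
  | succ j ih =>
    rw [iterC, Function.iterate_succ_apply']
    intro hzero
    apply ih
    have h2 : (iterC s a j).comp (sInv s) = 0 := hzero
    calc iterC s a j = ((iterC s a j).comp (sInv s)).comp s := by
          rw [comp_assoc, sInv_comp_s s hs, comp_X]
      _ = 0 := by rw [h2, zero_comp]

noncomputable def cpol (n : ℤ) : k[X] :=
  if 0 ≤ n then 1 else iterC s a ((-n).toNat - 1)

theorem cpol_ne (hs : s.degree = 1) (ha : a ≠ 0) (n : ℤ) :
    cpol s a n ≠ 0 := by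
  rw [cpol]
  split_ifs
  · exact one_ne_zero
  · exact iterC_ne s a hs ha _

theorem ypow_aeval (hs : s.degree = 1) (j : ℕ) (g : k[X]) :
    YY ^ j * aeval HH g =
      aeval HH ((fun q : k[X] => q.comp (sInv s))^[j] g) * YY ^ j := by
  induction j generalizing g with
  | zero => rw [pow_zero, one_mul, Function.iterate_zero_apply, mul_one]
  | succ j ih =>
    rw [pow_succ, mul_assoc, y_aeval s a hs, ← mul_assoc, ih _, mul_assoc,
      ← pow_succ, ← Function.iterate_succ_apply]

theorem wmon_x (hs : s.degree = 1) (n : ℤ) :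
    wmon s a n * XX = aeval HH (cpol s a n) * wmon s a (n + 1) := by
  rcases le_or_gt 0 n with h | h
  · rw [cpol, if_pos h, map_one, one_mul, wmon_nonneg s a h,
      wmon_nonneg s a (by omega), ← pow_succ,
      show (n + 1).toNat = n.toNat + 1 by omega]
  · rw [cpol, if_neg (not_le.mpr h), wmon_nonpos s a h.le,
      wmon_nonpos s a (by omega : n + 1 ≤ 0),
      show (-n).toNat = (-(n+1)).toNat + 1 by omega, pow_succ, mul_assoc,
      yx_rel, ypow_aeval s a hs, iterC,
      show (-(n+1)).toNat = (-n).toNat - 1 by omega]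
    norm_num

noncomputable def Dm : (ℤ →₀ k[X]) →ₗ[k] (ℤ →₀ k[X]) :=
  Finsupp.lsum k fun n : ℤ =>
    Finsupp.lsingle (n + 1) ∘ₗ LinearMap.mulRight k (cpol s a n)

theorem Dm_single (n : ℤ) (f : k[X]) :
    Dm s a (Finsupp.single n f) = Finsupp.single (n + 1) (f * cpol s a n) := by
  rw [Dm, Finsupp.lsum_single]; rfl

theorem T_x (hs : s.degree = 1) (m : ℤ →₀ k[X]) :
    Tm s a m * XX = Tm s a (Dm s a m) := by
  have : LinearMap.mulRight k XX ∘ₗ (Tm s a) = (Tm s a) ∘ₗ (Dm s a) := by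
    refine Finsupp.lhom_ext fun n f => ?_
    rw [LinearMap.comp_apply, LinearMap.comp_apply, Dm_single, Tm_single,
      Tm_single, LinearMap.mulRight_apply, mul_assoc, wmon_x s a hs,
      map_mul, mul_assoc]
  exact DFunLike.congr_fun this m

theorem Dm_apply (m : ℤ →₀ k[X]) (n : ℤ) :
    Dm s a m (n + 1) = m n * cpol s a n := by
  rw [Dm, Finsupp.lsum_apply, Finsupp.sum_apply]
  simp only [LinearMap.comp_apply, Finsupp.lsingle_apply,
    LinearMap.mulRight_apply, Finsupp.single_apply, add_left_inj]
  rw [Finsupp.sum_ite_eq']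
  split_ifs with hmem
  · rfl
  · rw [Finsupp.notMem_support_iff.mp hmem, zero_mul]

theorem Dm_inj (hs : s.degree = 1) (ha : a ≠ 0) (m : ℤ →₀ k[X])
    (hm : Dm s a m = 0) : m = 0 := by
  ext n
  have h1 := Dm_apply s a m n
  rw [hm, Finsupp.zero_apply] at h1
  rcases mul_eq_zero.mp h1.symm with h | h
  · rw [h]; rfl
  · exact absurd h (cpol_ne s a hs ha n)

theorem x_reg (hs : s.degree = 1) (ha : a ≠ 0) (c : Λ) (h : c * XX = 0) :
    c = 0 := by
  have h2 : Tm s a (Dm s a (eps s a hs c)) = 0 := by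
    rw [← T_x s a hs, Teps s a hs, h]
  have h3 : Dm s a (eps s a hs c) = 0 := by
    rw [← epsT s a hs (Dm s a (eps s a hs c)), h2, map_zero]
  have h4 : eps s a hs c = 0 := Dm_inj s a hs ha _ h3
  rw [← Teps s a hs c, h4, map_zero]

end Lambda
end GWAProof

/-- In a generalized Weyl algebra `Λ = Λ(k[h], σ, a)` (with `σ` the
automorphism of `k[h]` sending `h` to the degree-one polynomial `s`), if
`gcd(a, a') = 1` then for every irreducible `p` dividing `a` the left ideal
`I(x,p) = Λx + Λp` is a projective left `Λ`-module. -/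
theorem gwa_ideal_projective (k : Type*) [Field k] [CharZero k]
    (s : k[X]) (hs : s.degree = 1) (a : k[X]) (ha : a ≠ 0)
    (hcop : IsCoprime a (derivative a))
    (p : k[X]) (hp : Irreducible p) (hpa : p ∣ a) :
    Module.Projective (GWAS k s a)
      ↥(Submodule.span (GWAS k s a)
        ({GWAS.x k s a, aeval (GWAS.h k s a) p} : Set (GWAS k s a))) := by
  classical
  obtain ⟨b, hb⟩ := hpa
  have hpb : ¬ p ∣ b := by
    intro hdvd
    have h1 : p ∣ a := ⟨b, hb⟩
    have h2 : p ∣ derivative a := by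
      rw [hb, derivative_mul]
      exact dvd_add (hdvd.mul_left (derivative p)) (dvd_mul_right p (derivative b))
    exact hp.not_isUnit (hcop.isUnit_of_dvd' h1 h2)
  have hco : IsCoprime p b := (hp.coprime_iff_not_dvd).mpr hpb
  obtain ⟨u, v, huv⟩ := hco
  set Λ := GWAS k s a with hΛ
  set XL := GWAS.x k s a with hXL
  set YL := GWAS.y k s a with hYL
  set HL := GWAS.h k s a with hHL
  set PP := aeval HL p with hPP
  set I := Submodule.span Λ ({XL, PP} : Set Λ) with hI
  have hxI : XL ∈ I := Submodule.subset_span (Set.mem_insert _ _)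
  have hpI : PP ∈ I := Submodule.subset_span (Set.mem_insert_of_mem _ rfl)
  -- the splitting maps
  have memlem : ∀ rt : Λ × Λ,
      ((LinearMap.toSpanSingleton Λ Λ XL).coprod
        (LinearMap.toSpanSingleton Λ Λ PP)) rt ∈ I := by
    intro rt
    exact Submodule.add_mem _ (Submodule.smul_mem _ _ hxI)
      (Submodule.smul_mem _ _ hpI)
  set sMap : (Λ × Λ) →ₗ[Λ] I :=
    LinearMap.codRestrict I
      ((LinearMap.toSpanSingleton Λ Λ XL).coprod
        (LinearMap.toSpanSingleton Λ Λ PP)) memlem with hsMap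
  -- existence of division by x
  have key : ∀ c ∈ I, ∃ d : Λ, d * XL = c * aeval HL (v * b) := by
    intro c hc
    induction hc using Submodule.span_induction with
    | mem z hz =>
      rcases hz with hz | hz
      · exact ⟨aeval HL ((v * b).comp s), by rw [hz, ← GWAProof.x_aeval]⟩
      · refine ⟨aeval HL v * YL, ?_⟩
        rw [hz, hPP, mul_assoc, GWAProof.yx_rel, ← map_mul, ← map_mul]
        congr 1
        rw [hb]; ring
    | zero => exact ⟨0, by rw [zero_mul, zero_mul]⟩
    | add z w hz hw ihz ihw =>
      obtain ⟨d1, hd1⟩ := ihz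
      obtain ⟨d2, hd2⟩ := ihw
      exact ⟨d1 + d2, by rw [add_mul, hd1, hd2, add_mul]⟩
    | smul r z hz ihz =>
      obtain ⟨d, hd⟩ := ihz
      exact ⟨r * d, by rw [mul_assoc, hd, smul_eq_mul, mul_assoc]⟩
  have key' : ∀ c : I, ∃ d : Λ, d * XL = c.1 * aeval HL (v * b) :=
    fun c => key c.1 c.2
  choose fd hfd using key'
  have uniq : ∀ d d' : Λ, d * XL = d' * XL → d = d' := by
    intro d d' hdd
    have : (d - d') * XL = 0 := by rw [sub_mul, hdd, sub_self]
    have h0 := GWAProof.x_reg s a hs ha _ this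
    exact sub_eq_zero.mp h0
  set φ : I →ₗ[Λ] Λ :=
    { toFun := fd
      map_add' := fun c c' => by
        apply uniq
        rw [add_mul, hfd, hfd, hfd, Submodule.coe_add, add_mul]
      map_smul' := fun r c => by
        apply uniq
        rw [RingHom.id_apply, smul_eq_mul, mul_assoc, hfd, hfd,
          Submodule.coe_smul, smul_eq_mul, mul_assoc] } with hφ
  set ψ : I →ₗ[Λ] Λ :=
    (LinearMap.toSpanSingleton Λ Λ (aeval HL u)) ∘ₗ I.subtype with hψ
  have split : sMap ∘ₗ (φ.prod ψ) = LinearMap.id := by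
    apply LinearMap.ext
    intro c
    apply Subtype.ext
    have hval : ((sMap ((φ.prod ψ) c)) : Λ) =
        fd c * XL + (c.1 * aeval HL u) * PP := by
      simp [hsMap, hφ, hψ, LinearMap.toSpanSingleton_apply, smul_eq_mul,
        mul_assoc]
    rw [LinearMap.comp_apply, hval, hfd, hPP, mul_assoc, ← map_mul,
      ← mul_add, ← map_add]
    have : v * b + u * p = 1 := by rw [← huv]; ring
    rw [this, map_one, mul_one, LinearMap.id_apply]
  exact Module.Projective.of_split (φ.prod ψ) sMap split
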